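/- The type checking transition system is terminating: there is no infinite sequence of transitions (Ψ, σ) → (Ψ', σ') → ⋯ of the type checking algorithm, because each transition rule is defined by recursion on the structure of the expressions e and the goal types T in the tuples of Ψ, each step strictly decreasing the combined structural size of the expression–type pairs being checked. -/

import Mathlib

namespace Paper

/-! ## Types of System F_ω

Type variables are partitioned into *free variables* (`fvar`, substitutable) and
*eigenvariables* (`evar`, not substitutable).  Binders (`all`, `lam`) bind
eigenvariable names. -/

inductive Ty : Type
  | const : ℕ → Ty
  | fvar : ℕ → Ty
  | evar : ℕ → Ty
  | all : ℕ → Ty → Ty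
  | arrow : Ty → Ty → Ty
  | app : Ty → Ty → Ty
  | lam : ℕ → Ty → Ty
  deriving DecidableEq

namespace Ty

/-- free variables of a type -/
def FV : Ty → Finset ℕ
  | const _ => ∅
  | fvar a => {a}
  | evar _ => ∅
  | all _ T => FV T
  | arrow T₁ T₂ => FV T₁ ∪ FV T₂
  | app T₁ T₂ => FV T₁ ∪ FV T₂
  | lam _ T => FV T

/-- eigenvariables occurring (free) in a type -/
def EV : Ty → Finset ℕ
  | const _ => ∅
  | fvar _ => ∅
  | evar a => {a}
  | all a T => EV T \ {a}
  | arrow T₁ T₂ => EV T₁ ∪ EV T₂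
  | app T₁ T₂ => EV T₁ ∪ EV T₂
  | lam a T => EV T \ {a}

/-- substitute `S` for the free variable `a` : `[S/a]T` -/
def substF (a : ℕ) (S : Ty) : Ty → Ty
  | const c => const c
  | fvar b => if b = a then S else fvar b
  | evar b => evar b
  | all b T => all b (substF a S T)
  | arrow T₁ T₂ => arrow (substF a S T₁) (substF a S T₂)
  | app T₁ T₂ => app (substF a S T₁) (substF a S T₂)
  | lam b T => lam b (substF a S T)

/-- substitute `S` for the eigenvariable `a` (used to open binders and for β) -/
def substE (a : ℕ) (S : Ty) : Ty → Ty
  | const c => const c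
  | fvar b => fvar b
  | evar b => if b = a then S else evar b
  | all b T => if b = a then all b T else all b (substE a S T)
  | arrow T₁ T₂ => arrow (substE a S T₁) (substE a S T₂)
  | app T₁ T₂ => app (substE a S T₁) (substE a S T₂)
  | lam b T => if b = a then lam b T else lam b (substE a S T)

/-- structural size of a type -/
def size : Ty → ℕ
  | const _ => 1
  | fvar _ => 1
  | evar _ => 1
  | all _ T => T.size + 1
  | arrow T₁ T₂ => T₁.size + T₂.size + 1
  | app T₁ T₂ => T₁.size + T₂.size + 1
  | lam _ T => T.size + 1

end Ty

/-- type equivalence, generated by the β-rule `(λa.T) T' = [T'/a]T` -/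
inductive TyEq : Ty → Ty → Prop
  | refl (T) : TyEq T T
  | symm {T T'} : TyEq T T' → TyEq T' T
  | trans {T₁ T₂ T₃} : TyEq T₁ T₂ → TyEq T₂ T₃ → TyEq T₁ T₃
  | beta (a T S) : TyEq (.app (.lam a T) S) (T.substE a S)
  | allCongr (a) {T T'} : TyEq T T' → TyEq (.all a T) (.all a T')
  | arrowCongr {T₁ T₁' T₂ T₂'} :
      TyEq T₁ T₁' → TyEq T₂ T₂' → TyEq (.arrow T₁ T₂) (.arrow T₁' T₂')
  | appCongr {T₁ T₁' T₂ T₂'} :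
      TyEq T₁ T₁' → TyEq T₂ T₂' → TyEq (.app T₁ T₂) (.app T₁' T₂')
  | lamCongr (a) {T T'} : TyEq T T' → TyEq (.lam a T) (.lam a T')

/-! ## Substitutions -/

/-- A substitution is a finite collection of bindings `[T/a]` of types for free
variables (composition `σ'·σ` is accumulation). -/
abbrev Subst := List (ℕ × Ty)

/-- domain of a substitution -/
def Subst.dom (σ : Subst) : Finset ℕ := σ.foldr (fun p s => insert p.1 s) ∅

/-- free variables of the codomain -/
def Subst.codomFV (σ : Subst) : Finset ℕ := σ.foldr (fun p s => p.2.FV ∪ s) ∅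

/-- eigenvariables of the codomain -/
def Subst.codomEV (σ : Subst) : Finset ℕ := σ.foldr (fun p s => p.2.EV ∪ s) ∅

/-- `dom(σ) # codom(σ)` : the free variables in the codomain are disjoint from
the domain -/
def Subst.apart (σ : Subst) : Prop := Disjoint (Subst.dom σ) (Subst.codomFV σ)

/-- `agree(σ)` : any two bindings for the same variable are equivalent types -/
def Subst.agree (σ : Subst) : Prop :=
  ∀ a T T', (a, T) ∈ σ → (a, T') ∈ σ → TyEq T T'

/-- apply a substitution to a type -/
def applySubst (σ : Subst) (T : Ty) : Ty := σ.foldl (fun T p => T.substF p.1 p.2) T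

/-- semantic composition `σ₂·σ₁` of substitutions -/
def Subst.comp (σ₂ σ₁ : Subst) : Subst :=
  σ₁.map (fun p => (p.1, applySubst σ₂ p.2)) ++ σ₂

/-! ## Spines and iterated binders -/

/-- `spine h [T₁,…,Tₙ] = h T₁ … Tₙ` -/
def spine (h : Ty) (args : List Ty) : Ty := args.foldl .app h

/-- `lams [a₁,…,aₙ] T = λa₁.…λaₙ.T` -/
def lams (xs : List ℕ) (T : Ty) : Ty := xs.foldr .lam T

/-- `allList [a₁,…,aₙ] T = ∀a₁.…∀aₙ.T` -/
def allList (xs : List ℕ) (T : Ty) : Ty := xs.foldr .all T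

/-- `arrows [T₁,…,Tₙ] T = T₁ → … → Tₙ → T` -/
def arrows (Ts : List Ty) (T : Ty) : Ty := Ts.foldr .arrow T

/-- `πₙⁱ = λa₁.…λaₙ.aᵢ` (0-indexed `i < n`) -/
def projTy (n i : ℕ) : Ty := lams (List.range n) (.evar i)

/-- `θₙᵐ(C) = λa₁.…λaₙ. C (b₁ a₁ … aₙ) … (bₘ a₁ … aₙ)` with fresh free
variables `bs = [b₁,…,bₘ]` -/
def thetaTy (n : ℕ) (C : ℕ) (bs : List ℕ) : Ty :=
  lams (List.range n)
    (spine (.const C) (bs.map fun b => spine (.fvar b) ((List.range n).map .evar)))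

/-! ## Equation systems -/

/-- a finite collection of equations between types -/
abbrev Eqns := Multiset (Ty × Ty)

/-- free variables of an equation system -/
def Eqns.fvs (E : Eqns) : Finset ℕ := (E.map fun p => p.1.FV ∪ p.2.FV).sup

/-- eigenvariables of an equation system -/
def Eqns.evs (E : Eqns) : Finset ℕ := (E.map fun p => p.1.EV ∪ p.2.EV).sup

/-- apply a single binding to all equations -/
def substEqns (a : ℕ) (T : Ty) (E : Eqns) : Eqns :=
  E.map fun p => (p.1.substF a T, p.2.substF a T)

/-- a type which is a (free or eigen) variable -/
def IsVar : Ty → Prop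
  | .fvar _ => True
  | .evar _ => True
  | _ => False

/-! ## Dowek's bidirectional second-order matching

A transition system on triples `(E, V, σ)` where `E` is a set of equations,
`V` a set of eigenvariables and `σ` a substitution.  The parameter
`fo : ℕ → Bool` tells which free variables are first-order (of kind `*`). -/

inductive MStep (fo : ℕ → Bool) :
    Eqns × Finset ℕ × Subst → Eqns × Finset ℕ × Subst → Prop
  /-- (1) `({a = a} ∪ E, V, σ) → (E, V, σ)` -/
  | delete (v : Ty) (hv : IsVar v) (E V σ) :
      MStep fo ((v, v) ::ₘ E, V, σ) (E, V, σ)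
  /-- (2) `({a = T} ∪ E, V, σ) → ([T/a]E, V, [T/a]·σ)` for a first-order `a`,
  `a ∉ FV(T)`, `T ≢ a` -/
  | solve (a : ℕ) (T : Ty) (E V σ) (hfo : fo a = true) (ha : a ∉ T.FV)
      (hne : T ≠ .fvar a) :
      MStep fo ((.fvar a, T) ::ₘ E, V, σ) (substEqns a T E, V, (a, T) :: σ)
  /-- (3) `({T = a} ∪ E, V, σ) → ({a = T} ∪ E, V, σ)` -/
  | swap (T v : Ty) (hv : IsVar v) (E V σ) :
      MStep fo ((T, v) ::ₘ E, V, σ) ((v, T) ::ₘ E, V, σ)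
  /-- (4) `({∀a.T = ∀b.T'} ∪ E, V, σ) → ({[a'/a]T = [a'/b]T'} ∪ E, V ∪ {a'}, σ)`
  with `a'` a fresh eigenvariable -/
  | forallE (a b a' : ℕ) (T T' : Ty) (E V σ)
      (hfresh : a' ∉ V ∧ a' ∉ Eqns.evs (((.all a T : Ty), (.all b T' : Ty)) ::ₘ E) ∧
        a' ∉ Subst.codomEV σ) :
      MStep fo (((.all a T : Ty), (.all b T' : Ty)) ::ₘ E, V, σ)
        ((T.substE a (.evar a'), T'.substE b (.evar a')) ::ₘ E, insert a' V, σ)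
  /-- (5) `({C T₁ … Tₙ = C T₁' … Tₙ'} ∪ E, V, σ) → ({T₁ = T₁', …, Tₙ = Tₙ'} ∪ E, V, σ)` -/
  | decomp (C : ℕ) (Ts Ts' : List Ty) (hlen : Ts.length = Ts'.length) (E V σ) :
      MStep fo ((spine (.const C) Ts, spine (.const C) Ts') ::ₘ E, V, σ)
        ((Ts.zip Ts' : Multiset (Ty × Ty)) + E, V, σ)
  /-- (6) projection -/
  | proj (a : ℕ) (Ts Ts' : List Ty) (C : ℕ) (i : Fin Ts.length) (E V σ) :
      MStep fo ((spine (.fvar a) Ts, spine (.const C) Ts') ::ₘ E, V, σ)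
        ((Ts.get i, spine (.const C) Ts') ::ₘ E, V, (a, projTy Ts.length i.val) :: σ)
  /-- (7) imitation, with fresh free variables `bs = [b₁,…,bₘ]` -/
  | imi (a : ℕ) (Ts Ts' : List Ty) (C : ℕ) (bs : List ℕ) (E V σ)
      (hlen : bs.length = Ts'.length) (hnodup : bs.Nodup)
      (hfresh : ∀ b ∈ bs,
        b ∉ Eqns.fvs ((spine (.fvar a) Ts, spine (.const C) Ts') ::ₘ E) ∪
            Subst.dom σ ∪ Subst.codomFV σ) :
      MStep fo ((spine (.fvar a) Ts, spine (.const C) Ts') ::ₘ E, V, σ)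
        (((bs.map fun b => spine (.fvar b) Ts).zip Ts' : Multiset (Ty × Ty)) + E, V,
          (a, thetaTy Ts.length C bs) :: σ)
  /-- (8) exchange -/
  | exch (C : ℕ) (Ts' : List Ty) (a : ℕ) (Ts : List Ty) (E V σ) :
      MStep fo ((spine (.const C) Ts', spine (.fvar a) Ts) ::ₘ E, V, σ)
        ((spine (.fvar a) Ts, spine (.const C) Ts') ::ₘ E, V, σ)

/-- `T ∼_σ T'` : successful bidirectional matching of `T` against `T'`
producing unifier `σ` -/
def Matches (fo : ℕ → Bool) (T T' : Ty) (σ : Subst) : Prop :=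
  ∃ V : Finset ℕ,
    Relation.ReflTransGen (MStep fo) (({(T, T')} : Eqns), ∅, ([] : Subst))
      ((0 : Eqns), V, σ) ∧
    (∀ v ∈ V, v ∉ Subst.codomEV σ) ∧ Subst.apart σ ∧ Subst.agree σ

/-! ## System F_ω terms and typing -/

/-- annotated expressions `p ::= c | x | p p' | λx:T.p | λa.p | p T` -/
inductive Tm : Type
  | const : ℕ → Tm
  | var : ℕ → Tm
  | app : Tm → Tm → Tm
  | lam : ℕ → Ty → Tm → Tm
  | tlam : ℕ → Tm → Tm
  | tapp : Tm → Ty → Tm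

/-- unannotated expressions `e ::= c | x | e e' | λx.e` -/
inductive UTm : Type
  | const : ℕ → UTm
  | var : ℕ → UTm
  | app : UTm → UTm → UTm
  | lam : ℕ → UTm → UTm
  deriving DecidableEq

/-- erasure of type annotations -/
def eraseTm : Tm → UTm
  | .const c => .const c
  | .var x => .var x
  | .app p q => .app (eraseTm p) (eraseTm q)
  | .lam x _ p => .lam x (eraseTm p)
  | .tlam _ p => eraseTm p
  | .tapp p _ => eraseTm p

/-- keys of a typing environment: term variables or term constants -/
inductive EKey : Type
  | var : ℕ → EKey
  | con : ℕ → EKey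
  deriving DecidableEq

/-- typing environments `Γ ::= · | Γ, x : T | Γ, c : T` -/
abbrev Env := List (EKey × Ty)

/-- free type variables of an environment -/
def Env.FVs (Γ : Env) : Finset ℕ := Γ.foldr (fun p s => p.2.FV ∪ s) ∅

/-- eigenvariables of an environment -/
def Env.EVs (Γ : Env) : Finset ℕ := Γ.foldr (fun p s => p.2.EV ∪ s) ∅

/-- the typing judgement `Γ ⊢ p : T` of System F_ω -/
inductive HasType : Env → Tm → Ty → Prop
  | var {Γ : Env} {x T} : (EKey.var x, T) ∈ Γ → HasType Γ (.var x) T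
  | con {Γ : Env} {c T} : (EKey.con c, T) ∈ Γ → HasType Γ (.const c) T
  | app {Γ p₁ p₂ T T'} :
      HasType Γ p₁ (.arrow T' T) → HasType Γ p₂ T' → HasType Γ (.app p₁ p₂) T
  | lam {Γ : Env} {x T T' p} :
      HasType ((EKey.var x, T') :: Γ) p T → HasType Γ (.lam x T' p) (.arrow T' T)
  | tlam {Γ a p T} :
      HasType Γ p T → a ∉ Env.EVs Γ → HasType Γ (.tlam a p) (.all a T)
  | tapp {Γ p a T T'} :
      HasType Γ p (.all a T) → HasType Γ (.tapp p T') (T.substE a T')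
  | conv {Γ p T T'} : HasType Γ p T → TyEq T T' → HasType Γ p T'

/-- apply a type substitution to the annotations of a term -/
def substTm (σ : Subst) : Tm → Tm
  | .const c => .const c
  | .var x => .var x
  | .app p q => .app (substTm σ p) (substTm σ q)
  | .lam x T p => .lam x (applySubst σ T) (substTm σ p)
  | .tlam a p => .tlam a (substTm σ p)
  | .tapp p T => .tapp (substTm σ p) (applySubst σ T)

/-- apply a type substitution to an environment -/
def substEnv (σ : Subst) (Γ : Env) : Env := Γ.map fun p => (p.1, applySubst σ p.2)

/-! ## Scope environments -/

/-- a type variable: free (`f`) or eigen (`e`) -/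
inductive TV : Type
  | f : ℕ → TV
  | e : ℕ → TV
  deriving DecidableEq

/-- a scope environment: a list of pairs of a type variable and a scope value -/
abbrev ScopeEnv := List (TV × ℕ)

/-- `L(v)` : the (minimal) scope value of `v` in `L`, arbitrarily large (`⊤`)
if `v ∉ L` -/
noncomputable def sval (L : ScopeEnv) (v : TV) : ℕ∞ :=
  (L.filterMap fun p => if p.1 = v then some (p.2 : ℕ∞) else none).foldr min ⊤

/-- `max(L)` : the maximal scope value of `L` (`0` if `L` is empty) -/
def seMax (L : ScopeEnv) : ℕ := (L.map Prod.snd).foldr max 0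

/-- `fst(L)` : the variables occurring in `L` -/
def fstSE (L : ScopeEnv) : Finset TV := L.foldr (fun p s => insert p.1 s) ∅

/-- free variables recorded in `L` -/
def seFVs (L : ScopeEnv) : Finset ℕ :=
  L.foldr (fun p s => match p.1 with | TV.f a => insert a s | _ => s) ∅

/-- eigenvariables recorded in `L` -/
def seEVs (L : ScopeEnv) : Finset ℕ :=
  L.foldr (fun p s => match p.1 with | TV.e a => insert a s | _ => s) ∅

/-- the scope check `Scope(L, σ)`: whenever `a ∈ dom(σ)` and `(a, n) ∈ L`,
every eigenvariable `b ∈ EV(σa)` satisfies `(b, n') ∈ L` with `n' < n` -/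
def Scope (L : ScopeEnv) (σ : Subst) : Prop :=
  ∀ a T n, (a, T) ∈ σ → (TV.f a, n) ∈ L →
    ∀ b ∈ T.EV, ∃ n', (TV.e b, n') ∈ L ∧ n' < n

/-- updating one entry of `L`: an eigenvariable entry is kept; a free-variable
entry `(a, n)` is replaced by entries `(b, Mᵃ)` for `b ∈ FV(σa)` where
`Mᵃ = min {L(a), L(FV(σa))}` -/
noncomputable def updEntry (σ : Subst) (L : ScopeEnv) : TV × ℕ → List (TV × ℕ)
  | (TV.e b, n) => [(TV.e b, n)]
  | (TV.f a, n) =>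
      (applySubst σ (.fvar a)).FV.toList.map fun b =>
        (TV.f b,
          (min (n : ℕ∞)
            (((applySubst σ (.fvar a)).FV).inf fun c => sval L (TV.f c))).toNat)

/-- `|L|` : the same variables as `L`, with every variable receiving its
minimal scope value -/
noncomputable def normSE (L : ScopeEnv) : ScopeEnv := L.map fun p => (p.1, (sval L p.1).toNat)

/-- the update `σL` of a scope environment by a substitution:
`σL = |L''| + L_eigen` -/
noncomputable def updSE (σ : Subst) (L : ScopeEnv) : ScopeEnv :=
  normSE ((L.filter fun p => match p.1 with | TV.f _ => true | _ => false).flatMap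
      (updEntry σ L)) ++
    L.filter fun p => match p.1 with | TV.e _ => true | _ => false

/-! ## The type checking transition system -/

/-- a tuple of the type checking algorithm: either a goal `(L, Γ, e, T)` or a
finished tuple `(L, Γ, ◇, ◇)` -/
inductive Task : Type
  | goal : ScopeEnv → Env → UTm → Ty → Task
  | done : ScopeEnv → Env → Task

def Task.scopeEnv : Task → ScopeEnv
  | .goal L _ _ _ => L
  | .done L _ => L

/-- apply a substitution to a tuple (updating its scope environment) -/
noncomputable def substTask (σ : Subst) : Task → Task
  | .goal L Γ e T => .goal (updSE σ L) (substEnv σ Γ) e (applySubst σ T)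
  | .done L Γ => .done (updSE σ L) (substEnv σ Γ)

/-- `(x|c) : T ∈ Γ` for a variable or constant -/
def AtomTy (Γ : Env) : UTm → Ty → Prop
  | .var x, T => (EKey.var x, T) ∈ Γ
  | .const c, T => (EKey.con c, T) ∈ Γ
  | _, _ => False

/-- `uspine h [e₁,…,eₙ] = h e₁ … eₙ` -/
def uspine (h : UTm) (es : List UTm) : UTm := es.foldl .app h

/-- `ulams [x₁,…,xₙ] e = λx₁.…λxₙ.e` -/
def ulams (xs : List ℕ) (e : UTm) : UTm := xs.foldr .lam e

def notLam : UTm → Prop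
  | .lam _ _ => False
  | _ => True

/-- instantiate the (eigen-named) binders `bs` by the types `Ss` -/
def instL (bs : List ℕ) (Ss : List Ty) (T : Ty) : Ty :=
  (bs.zip Ss).foldl (fun T p => T.substE p.1 p.2) T

def Task.FVs : Task → Finset ℕ
  | .goal L Γ _ T => seFVs L ∪ Env.FVs Γ ∪ T.FV
  | .done L Γ => seFVs L ∪ Env.FVs Γ

def Task.EVs : Task → Finset ℕ
  | .goal L Γ _ T => seEVs L ∪ Env.EVs Γ ∪ T.EV
  | .done L Γ => seEVs L ∪ Env.EVs Γ

/-- all free variables of a state (used for freshness) -/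
def stateFVs (Ψ : Multiset Task) (σ : Subst) : Finset ℕ :=
  (Ψ.map Task.FVs).sup ∪ Subst.dom σ ∪ Subst.codomFV σ

/-- all eigenvariables of a state (used for freshness) -/
def stateEVs (Ψ : Multiset Task) (σ : Subst) : Finset ℕ :=
  (Ψ.map Task.EVs).sup ∪ Subst.codomEV σ

/-- The type checking algorithm: a transition system on pairs `(Ψ, σ)`. -/
inductive TStep (fo : ℕ → Bool) :
    Multiset Task × Subst → Multiset Task × Subst → Prop
  /-- `→ₛ` : checking a variable or a constant `(x|c)` with
  `(x|c) : ∀a₁…∀aₖ.T' ∈ Γ` against `T`, via `T' ∼_{σ'} T` -/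
  | varConst (L : ScopeEnv) (Γ : Env) (u : UTm) (T : Ty)
      (bs : List ℕ) (T₀ : Ty) (as : List ℕ) (σ' : Subst) (Ψ : Multiset Task) (σ : Subst)
      (hatom : AtomTy Γ u (allList bs T₀))
      (hlen : as.length = bs.length) (hnodup : as.Nodup)
      (hfresh : ∀ x ∈ as, x ∉ stateFVs (Task.goal L Γ u T ::ₘ Ψ) σ)
      (hmatch : Matches fo (instL bs (as.map .fvar) T₀) T σ')
      (hscope : Scope L σ')
      (hscopeΨ : ∀ t ∈ Ψ, Scope t.scopeEnv σ') :
      TStep fo (Task.goal L Γ u T ::ₘ Ψ, σ)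
        (Task.done (updSE σ' (L ++ as.map fun a => (TV.f a, seMax L + 1)))
            (substEnv σ' Γ) ::ₘ Ψ.map (substTask σ'),
          σ' ++ σ)
  /-- `→ᵢ` : checking `λx₁.…λxₙ.e e₁ … eₖ` against `∀a₁.…∀aₘ.T₁,…,Tₙ → T`
  with `m > 0`: abstract the outermost quantified variables as fresh
  eigenvariables and strip the λ-abstractions -/
  | intro (L : ScopeEnv) (Γ : Env) (xs : List ℕ) (body : UTm)
      (bs : List ℕ) (U : Ty) (cs : List ℕ) (Ts : List Ty) (T : Ty)
      (Ψ : Multiset Task) (σ : Subst)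
      (hm : 0 < bs.length)
      (hlen : cs.length = bs.length) (hnodup : cs.Nodup)
      (hbody : notLam body)
      (hfresh : ∀ c ∈ cs,
        c ∉ stateEVs (Task.goal L Γ (ulams xs body) (allList bs U) ::ₘ Ψ) σ)
      (hopen : instL bs (cs.map .evar) U = arrows Ts T)
      (hxs : xs.length = Ts.length) :
      TStep fo (Task.goal L Γ (ulams xs body) (allList bs U) ::ₘ Ψ, σ)
        (Task.goal (L ++ cs.zipIdx.map fun p => (TV.e p.1, seMax L + 1 + p.2))
            ((xs.zip Ts).map (fun p => (EKey.var p.1, p.2)) ++ Γ) body T ::ₘ Ψ,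
          σ)
  /-- `→ₐ` : checking an (over-)application `(x|c) e₁ … eₙ` against `T` with
  `(x|c) : ∀a₁…∀aₖ.T₁',…,T_l' → T' ∈ Γ`, `l ≤ n`, via
  `T' ∼_{σ'} (b₁,…,b_{n−l} → T)` with fresh free variables `b₁,…,b_{n−l}` -/
  | overApp (L : ScopeEnv) (Γ : Env) (u : UTm) (es₁ es₂ : List UTm) (T : Ty)
      (bs : List ℕ) (Ts' : List Ty) (T' : Ty) (as bjs : List ℕ) (σ' : Subst)
      (Ψ : Multiset Task) (σ : Subst)
      (hn : 0 < es₁.length + es₂.length)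
      (hatom : AtomTy Γ u (allList bs (arrows Ts' T')))
      (hl : es₁.length = Ts'.length) (hbj : bjs.length = es₂.length)
      (hlen : as.length = bs.length) (hnodup : (as ++ bjs).Nodup)
      (hfresh : ∀ x ∈ as ++ bjs,
        x ∉ stateFVs (Task.goal L Γ (uspine u (es₁ ++ es₂)) T ::ₘ Ψ) σ)
      (hmatch : Matches fo (instL bs (as.map .fvar) T')
        (arrows (bjs.map .fvar) T) σ')
      (hscope : Scope L σ')
      (hscopeΨ : ∀ t ∈ Ψ, Scope t.scopeEnv σ') :
      TStep fo (Task.goal L Γ (uspine u (es₁ ++ es₂)) T ::ₘ Ψ, σ)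
        (((es₁.zip Ts').map fun p =>
            Task.goal (updSE σ' (L ++ (as ++ bjs).map fun x => (TV.f x, seMax L + 1)))
              (substEnv σ' Γ) p.1 (applySubst σ' (instL bs (as.map .fvar) p.2))
            : Multiset Task) +
          ((es₂.zip bjs).map fun p =>
            Task.goal (updSE σ' (L ++ (as ++ bjs).map fun x => (TV.f x, seMax L + 1)))
              (substEnv σ' Γ) p.1 (applySubst σ' (.fvar p.2))
            : Multiset Task) +
          Ψ.map (substTask σ'),
          σ' ++ σ)
  /-- `→_b` : checking a partial application `(x|c) e₁ … eₙ` against `T` with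
  `(x|c) : ∀a₁…∀aₖ.T₁',…,T_l' → T' ∈ Γ`, `0 < n < l`, via
  `(T_{n+1}',…,T_l' → T') ∼_{σ'} T` -/
  | partialApp (L : ScopeEnv) (Γ : Env) (u : UTm) (es : List UTm) (T : Ty)
      (bs : List ℕ) (Ts' : List Ty) (T' : Ty) (as : List ℕ) (σ' : Subst)
      (Ψ : Multiset Task) (σ : Subst)
      (hn : 0 < es.length) (hl : es.length < Ts'.length)
      (hatom : AtomTy Γ u (allList bs (arrows Ts' T')))
      (hlen : as.length = bs.length) (hnodup : as.Nodup)
      (hfresh : ∀ x ∈ as, x ∉ stateFVs (Task.goal L Γ (uspine u es) T ::ₘ Ψ) σ)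
      (hmatch : Matches fo
        (instL bs (as.map .fvar) (arrows (Ts'.drop es.length) T')) T σ')
      (hscope : Scope L σ')
      (hscopeΨ : ∀ t ∈ Ψ, Scope t.scopeEnv σ') :
      TStep fo (Task.goal L Γ (uspine u es) T ::ₘ Ψ, σ)
        (((es.zip Ts').map fun p =>
            Task.goal (updSE σ' (L ++ as.map fun x => (TV.f x, seMax L + 1)))
              (substEnv σ' Γ) p.1 (applySubst σ' (instL bs (as.map .fvar) p.2))
            : Multiset Task) +
          Ψ.map (substTask σ'),
          σ' ++ σ)

/-- a tuple whose scope environment records all its free type variables -/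
def recorded : Task → Prop
  | .goal L Γ _ T => ∀ a ∈ Env.FVs Γ ∪ T.FV, TV.f a ∈ fstSE L
  | .done L Γ => ∀ a ∈ Env.FVs Γ, TV.f a ∈ fstSE L


/-! ### Auxiliary size measures for termination -/

/-- structural size of an unannotated expression -/
def usize : UTm → ℕ
  | .const _ => 1
  | .var _ => 1
  | .app e e' => usize e + usize e' + 1
  | .lam _ e => usize e + 1

theorem usize_pos (e : UTm) : 0 < usize e := by
  cases e <;> simp [usize]

theorem usize_ulams (xs : List ℕ) (e : UTm) :
    usize (ulams xs e) = xs.length + usize e := by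
  induction xs with
  | nil => simp [ulams]
  | cons x xs ih =>
    simp [ulams, usize] at *
    omega

theorem usize_uspine (h : UTm) (l : List UTm) :
    usize (uspine h l) = usize h + (l.map usize).sum + l.length := by
  induction l generalizing h with
  | nil => simp [uspine]
  | cons e l ih =>
    simp only [uspine, List.foldl_cons] at *
    rw [ih]
    simp [usize]
    omega

theorem ty_size_pos (T : Ty) : 0 < T.size := by
  cases T <;> simp [Ty.size]

theorem size_allList (bs : List ℕ) (T : Ty) :
    (allList bs T).size = bs.length + T.size := by
  induction bs with
  | nil => simp [allList]
  | cons b bs ih => simp [allList, Ty.size] at *; omega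

theorem size_le_arrows (Ts : List Ty) (T : Ty) :
    T.size + Ts.length ≤ (arrows Ts T).size := by
  induction Ts with
  | nil => simp [arrows]
  | cons S Ts ih =>
    simp only [arrows, List.foldr_cons] at *
    simp [Ty.size]
    have := ty_size_pos S
    omega

theorem size_substE_evar_le (a c : ℕ) (T : Ty) :
    (T.substE a (.evar c)).size ≤ T.size := by
  show (Ty.substE a T (.evar c)).size ≤ T.size
  simp only [Ty.substE]
  split
  · exact le_refl _
  · simp [Ty.size]; exact ty_size_pos T

theorem size_foldl_substE_evars_le (l : List (ℕ × Ty)) (U : Ty)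
    (h : ∀ p ∈ l, ∃ c, p.2 = Ty.evar c) :
    (l.foldl (fun T p => T.substE p.1 p.2) U).size ≤ U.size := by
  induction l generalizing U with
  | nil => exact le_refl _
  | cons p l ih =>
    simp only [List.foldl_cons]
    refine le_trans (ih _ (fun q hq => h q (List.mem_cons_of_mem _ hq))) ?_
    obtain ⟨c, hc⟩ := h p (List.mem_cons_self)
    rw [hc]
    exact size_substE_evar_le _ _ _

theorem size_instL_evars_le (bs cs : List ℕ) (U : Ty) :
    (instL bs (cs.map .evar) U).size ≤ U.size := by
  apply size_foldl_substE_evars_le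
  intro p hp
  have := List.of_mem_zip hp
  obtain ⟨c, _, hc⟩ := List.mem_map.mp this.2
  exact ⟨c, hc.symm⟩

theorem lex_left {a a' b b' : ℕ} (h : a' < a) :
    Prod.Lex (· < ·) (· < ·) (a', b') (a, b) := Prod.Lex.left _ _ h

theorem lex_right {a a' b b' : ℕ} (h1 : a' = a) (h2 : b' < b) :
    Prod.Lex (· < ·) (· < ·) (a', b') (a, b) := by
  subst h1; exact Prod.Lex.right _ h2

/-- the primary measure of a tuple: the size of its expression -/
def m1 : Task → ℕ
  | .goal _ _ e _ => usize e
  | .done _ _ => 0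

/-- the secondary measure of a tuple: the size of its goal type -/
def m2 : Task → ℕ
  | .goal _ _ _ T => T.size
  | .done _ _ => 0

theorem m1_substTask (σ : Subst) (t : Task) : m1 (substTask σ t) = m1 t := by
  cases t <;> rfl

/-- primary measure of a state -/
def μ1 (Ψ : Multiset Task) : ℕ := (Ψ.map m1).sum

/-- secondary measure of a state -/
def μ2 (Ψ : Multiset Task) : ℕ := (Ψ.map m2).sum

theorem μ1_map_substTask (σ : Subst) (Ψ : Multiset Task) :
    μ1 (Ψ.map (substTask σ)) = μ1 Ψ := by
  simp [μ1, Multiset.map_map, Function.comp_def, m1_substTask]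

theorem sum_zip_fst {α β : Type} (f : α → ℕ) :
    ∀ (l₁ : List α) (l₂ : List β), l₁.length ≤ l₂.length →
    ((l₁.zip l₂).map (fun p => f p.1)).sum = (l₁.map f).sum := by
  intro l₁
  induction l₁ with
  | nil => intro l₂ _; simp
  | cons a l₁ ih =>
    intro l₂ h
    cases l₂ with
    | nil => simp at h
    | cons b l₂ =>
      simp only [List.zip_cons_cons, List.map_cons, List.sum_cons]
      rw [ih l₂ (by simpa using h)]

/-- every transition strictly decreases the measure `(μ1, μ2)`
lexicographically -/
theorem step_lex {fo : ℕ → Bool} {s t : Multiset Task × Subst}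
    (h : TStep fo s t) :
    Prod.Lex (· < ·) (· < ·) (μ1 t.1, μ2 t.1) (μ1 s.1, μ2 s.1) := by
  cases h with
  | varConst L Γ u T bs T₀ as σ' Ψ σ hatom hlen hnodup hfresh hmatch hscope hscopeΨ =>
    apply lex_left
    simp only [μ1, Multiset.map_cons, Multiset.sum_cons, Multiset.map_map,
      Function.comp_def, m1_substTask]
    simp only [m1.eq_1, m1.eq_2]
    have := usize_pos u
    rw [show Multiset.map (fun x => m1 x) Ψ = Multiset.map m1 Ψ from rfl]
    omega
  | intro L Γ xs body bs U cs Ts T Ψ σ hm hlen hnodup hbody hfresh hopen hxs =>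
    by_cases hx : xs = []
    · subst hx
      have hTs : Ts = [] := List.length_eq_zero_iff.mp (by simpa using hxs.symm)
      subst hTs
      have hT : T = instL bs (cs.map .evar) U := by
        simpa [arrows] using hopen.symm
      have h2 : T.size ≤ U.size := hT ▸ size_instL_evars_le bs cs U
      apply lex_right
      · simp [μ1, m1, ulams]
      · simp only [μ2, Multiset.map_cons, Multiset.sum_cons, m2]
        rw [size_allList]
        omega
    · apply lex_left
      simp only [μ1, Multiset.map_cons, Multiset.sum_cons, m1]
      rw [usize_ulams]
      have : 0 < xs.length := List.length_pos_iff.mpr hx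
      omega
  | overApp L Γ u es₁ es₂ T bs Ts' T' as bjs σ' Ψ σ hn hatom hl hbj hlen hnodup
      hfresh hmatch hscope hscopeΨ =>
    apply lex_left
    simp only [μ1, Multiset.map_cons, Multiset.sum_cons, Multiset.map_add,
      Multiset.sum_add, Multiset.map_coe, Multiset.sum_coe, Multiset.map_map,
      List.map_map, Function.comp_def, m1_substTask]
    simp only [m1.eq_1, m1.eq_2]
    rw [sum_zip_fst usize es₁ Ts' (le_of_eq hl),
        sum_zip_fst usize es₂ bjs (le_of_eq hbj.symm)]
    rw [usize_uspine]
    have := usize_pos u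
    simp only [List.map_append, List.sum_append]
    rw [show Multiset.map (fun x => m1 x) Ψ = Multiset.map m1 Ψ from rfl]
    omega
  | partialApp L Γ u es T bs Ts' T' as σ' Ψ σ hn hl hatom hlen hnodup hfresh
      hmatch hscope hscopeΨ =>
    apply lex_left
    simp only [μ1, Multiset.map_cons, Multiset.sum_cons, Multiset.map_add,
      Multiset.sum_add, Multiset.map_coe, Multiset.sum_coe, Multiset.map_map,
      List.map_map, Function.comp_def, m1_substTask]
    simp only [m1.eq_1, m1.eq_2]
    rw [sum_zip_fst usize es Ts' (le_of_lt hl)]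
    rw [usize_uspine]
    have := usize_pos u
    rw [show Multiset.map (fun x => m1 x) Ψ = Multiset.map m1 Ψ from rfl]
    omega

/-- **Termination of the type checking transition system**: there is no
infinite sequence of transitions `(Ψ, σ) → (Ψ', σ') → ⋯` of the type checking
algorithm. -/
theorem typechecking_terminating (fo : ℕ → Bool) :
    ¬ ∃ f : ℕ → Multiset Task × Subst, ∀ n, TStep fo (f n) (f (n + 1)) := by
  rintro ⟨f, hf⟩
  have wf : WellFounded (Prod.Lex ((· < ·) : ℕ → ℕ → Prop) ((· < ·) : ℕ → ℕ → Prop)) :=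
    WellFounded.prod_lex Nat.lt_wfRel.wf Nat.lt_wfRel.wf
  have key : ∀ p : ℕ × ℕ, ∀ n, (μ1 (f n).1, μ2 (f n).1) = p → False := by
    intro p
    induction p using wf.induction with
    | _ p ih =>
      intro n hn
      exact ih _ (hn ▸ step_lex (hf n)) (n + 1) rfl
  exact key _ 0 rfl

end Paper
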